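/- arXiv:2009.02866 — 7 statements merged into one kernel-verified Lean document; each statement's English description precedes it below -/
import Mathlib

section
/- Let (M, d) be a metric space, K : M × M → ℝ a continuous strictly positive definite kernel, and x_1, …, x_n ∈ M pairwise distinct. Then there exist ε > 0 and θ > 0 such that for every choice of points y_1, …, y_n ∈ M with d(x_i, y_i) ≤ ε for each i = 1, …, n, the matrix S = S(y_1, …, y_n) satisfies ‖S α‖ ≥ θ ‖α‖ for all α ∈ ℝ^n. -/
open MeasureTheory Matrix Set

/-- Euclidean norm of a vector in `ℝ^m`. -/
noncomputable def eNorm {m : ℕ} (v : Fin m → ℝ) : ℝ := Real.sqrt (∑ i, v i ^ 2)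

/-- The kernel combination `g_α(y) = Σ_i α_i K(x_i, y)`. -/
def gcomb {M : Type*} {n : ℕ} (K : M → M → ℝ) (xc : Fin n → M) (α : Fin n → ℝ) (y : M) : ℝ :=
  ∑ i, α i * K (xc i) y

/-- The matrix `S(y_1,…,y_n)` with entries `S_{ij} = K(x_j, y_i)`. -/
def Smat {M : Type*} {n : ℕ} (K : M → M → ℝ) (xc : Fin n → M) (y : Fin n → M) :
    Matrix (Fin n) (Fin n) ℝ :=
  Matrix.of fun i j => K (xc j) (y i)

/-- A kernel is strictly positive definite: symmetric, and the Gram matrix of any finite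
collection of pairwise distinct points is positive definite. -/
def StrictlyPD {M : Type*} (K : M → M → ℝ) : Prop :=
  (∀ y z, K y z = K z y) ∧
  ∀ (m : ℕ) (y : Fin m → M), Function.Injective y →
    (Matrix.of fun i j => K (y i) (y j)).PosDef

lemma eNorm_eq {m : ℕ} (v : Fin m → ℝ) :
    eNorm v = ‖(WithLp.equiv 2 (Fin m → ℝ)).symm v‖ := by
  simp [eNorm, EuclideanSpace.norm_eq, Real.norm_eq_abs, sq_abs]

/-- Lower bound for a positive definite matrix. -/
lemma posdef_lower {n : ℕ} (G : Matrix (Fin n) (Fin n) ℝ) (hG : G.PosDef) :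
    ∃ c > 0, ∀ α : Fin n → ℝ, c * eNorm α ≤ eNorm (G *ᵥ α) := by
  set L : EuclideanSpace ℝ (Fin n) →ₗ[ℝ] EuclideanSpace ℝ (Fin n) := Matrix.toEuclideanLin G
  have hinj : Function.Injective L := by
    rw [← LinearMap.ker_eq_bot, LinearMap.ker_eq_bot']
    intro x hx
    by_contra hx0
    have hmv : G *ᵥ (WithLp.equiv 2 (Fin n → ℝ)) x = 0 := by
      have := congrArg (WithLp.equiv 2 (Fin n → ℝ)) hx
      simpa [L, Matrix.toEuclideanLin_apply] using this
    have hpos := hG.dotProduct_mulVec_pos (x := (WithLp.equiv 2 (Fin n → ℝ)) x) (by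
      intro h; exact hx0 ((WithLp.equiv 2 (Fin n → ℝ)).injective (by simpa using h)))
    rw [hmv] at hpos
    simp at hpos
  have hbij : Function.Bijective L :=
    ⟨hinj, (LinearMap.injective_iff_surjective).mp hinj⟩
  let e : EuclideanSpace ℝ (Fin n) ≃L[ℝ] EuclideanSpace ℝ (Fin n) :=
    (LinearEquiv.ofBijective L hbij).toContinuousLinearEquiv
  set C : ℝ := ‖(e.symm : EuclideanSpace ℝ (Fin n) →L[ℝ] EuclideanSpace ℝ (Fin n))‖ with hC
  have hCnn : 0 ≤ C := norm_nonneg _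
  refine ⟨(C + 1)⁻¹, by positivity, fun α => ?_⟩
  set x : EuclideanSpace ℝ (Fin n) := (WithLp.equiv 2 (Fin n → ℝ)).symm α
  have hex : (e : EuclideanSpace ℝ (Fin n) → EuclideanSpace ℝ (Fin n)) x = L x := rfl
  have hLx : L x = (WithLp.equiv 2 (Fin n → ℝ)).symm (G *ᵥ α) := by
    simp [L, Matrix.toEuclideanLin_apply, x]
  have key : ‖x‖ ≤ C * ‖L x‖ := by
    calc ‖x‖ = ‖e.symm (e x)‖ := by simp
    _ ≤ C * ‖(e : EuclideanSpace ℝ (Fin n) → EuclideanSpace ℝ (Fin n)) x‖ :=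
        (e.symm : EuclideanSpace ℝ (Fin n) →L[ℝ] EuclideanSpace ℝ (Fin n)).le_opNorm _
    _ = C * ‖L x‖ := by rw [hex]
  have key2 : ‖x‖ ≤ (C + 1) * ‖L x‖ := by
    nlinarith [norm_nonneg (L x)]
  rw [eNorm_eq, eNorm_eq, ← hLx]
  rw [inv_mul_le_iff₀ (by positivity)]
  exact key2

/-- Frobenius bound on mulVec. -/
lemma frobenius_bound {n : ℕ} (A : Matrix (Fin n) (Fin n) ℝ) (α : Fin n → ℝ) :
    eNorm (A *ᵥ α) ≤ Real.sqrt (∑ i, ∑ j, A i j ^ 2) * eNorm α := by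
  unfold eNorm
  rw [← Real.sqrt_mul (by positivity)]
  apply Real.sqrt_le_sqrt
  rw [Finset.sum_mul]
  apply Finset.sum_le_sum
  intro i _
  simpa [Matrix.mulVec, dotProduct] using
    Finset.sum_mul_sq_le_sq_mul_sq Finset.univ (fun j => A i j) α

theorem stmt0 {M : Type*} [MetricSpace M] {n : ℕ}
    (K : M → M → ℝ) (hKcont : Continuous fun p : M × M => K p.1 p.2)
    (hKspd : StrictlyPD K)
    (xc : Fin n → M) (hxc : Function.Injective xc) :
    ∃ ε > 0, ∃ θ > 0, ∀ y : Fin n → M, (∀ i, dist (xc i) (y i) ≤ ε) →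
      ∀ α : Fin n → ℝ, θ * eNorm α ≤ eNorm ((Smat K xc y) *ᵥ α) := by
  rcases Nat.eq_zero_or_pos n with hn | hn
  · subst hn
    exact ⟨1, one_pos, 1, one_pos, fun y _ α => by simp [eNorm]⟩
  -- Gram matrix
  set G : Matrix (Fin n) (Fin n) ℝ := Smat K xc xc with hGdef
  have hGeq : G = Matrix.of fun i j => K (xc i) (xc j) := by
    ext i j
    exact hKspd.1 (xc j) (xc i)
  have hGpd : G.PosDef := hGeq ▸ hKspd.2 n xc hxc
  obtain ⟨c, hc, hclow⟩ := posdef_lower G hGpd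
  set δ : ℝ := c / (2 * n) with hδ
  have hδpos : 0 < δ := by positivity
  -- continuity: for each pair (j, i), find a radius
  have hcont : ∀ p : Fin n × Fin n, ∃ ε > 0, ∀ z : M,
      dist z (xc p.2) ≤ ε → |K (xc p.1) z - K (xc p.1) (xc p.2)| ≤ δ := by
    intro p
    have h1 : Continuous fun z : M => K (xc p.1) z :=
      hKcont.comp (Continuous.prodMk_right (xc p.1))
    have h2 : ContinuousAt (fun z : M => K (xc p.1) z) (xc p.2) := h1.continuousAt
    rw [Metric.continuousAt_iff] at h2
    obtain ⟨r, hr, hball⟩ := h2 δ hδpos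
    refine ⟨r / 2, by positivity, fun z hz => ?_⟩
    have := hball (lt_of_le_of_lt hz (by linarith))
    rw [Real.dist_eq] at this
    exact this.le
  choose rad hradpos hrad using hcont
  have hne : (Finset.univ : Finset (Fin n × Fin n)).Nonempty := by
    have : Nonempty (Fin n) := ⟨⟨0, hn⟩⟩
    exact Finset.univ_nonempty
  set ε : ℝ := Finset.univ.inf' hne rad with hε
  have hεpos : 0 < ε := by
    rw [hε, Finset.lt_inf'_iff]
    exact fun p _ => hradpos p
  refine ⟨ε, hεpos, c / 2, by positivity, fun y hy α => ?_⟩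
  set S : Matrix (Fin n) (Fin n) ℝ := Smat K xc y with hSdef
  -- entrywise bound on G - S
  have hentry : ∀ i j, |(G - S) i j| ≤ δ := by
    intro i j
    have hεle : ε ≤ rad (j, i) := Finset.inf'_le rad (Finset.mem_univ (j, i))
    have hyi : dist (y i) (xc i) ≤ rad (j, i) := by
      rw [dist_comm]; exact le_trans (hy i) hεle
    have := hrad (j, i) (y i) hyi
    have heq : (G - S) i j = K (xc j) (xc i) - K (xc j) (y i) := by
      simp [hGdef, hSdef, Smat]
    rw [heq, abs_sub_comm]
    exact this
  -- Frobenius norm bound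
  have hfro : Real.sqrt (∑ i, ∑ j, (G - S) i j ^ 2) ≤ c / 2 := by
    have hsum : (∑ i, ∑ j : Fin n, (G - S) i j ^ 2) ≤ (n : ℝ) ^ 2 * δ ^ 2 := by
      calc (∑ i, ∑ j : Fin n, (G - S) i j ^ 2)
          ≤ ∑ _i : Fin n, ∑ _j : Fin n, δ ^ 2 := by
            apply Finset.sum_le_sum; intro i _
            apply Finset.sum_le_sum; intro j _
            have := hentry i j
            nlinarith [abs_nonneg ((G - S) i j), sq_abs ((G - S) i j)]
      _ = (n : ℝ) ^ 2 * δ ^ 2 := by simp [Finset.sum_const]; ring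
    calc Real.sqrt (∑ i, ∑ j, (G - S) i j ^ 2)
        ≤ Real.sqrt ((n : ℝ) ^ 2 * δ ^ 2) := Real.sqrt_le_sqrt hsum
    _ = (n : ℝ) * δ := by
        have h : (n : ℝ) ^ 2 * δ ^ 2 = ((n : ℝ) * δ) ^ 2 := by ring
        rw [h, Real.sqrt_sq (by positivity)]
    _ = c / 2 := by
        have hn' : (n : ℝ) ≠ 0 := Nat.cast_ne_zero.mpr hn.ne'
        field_simp [hδ]
        rw [hδ]; field_simp
  have hpert : eNorm ((G - S) *ᵥ α) ≤ (c / 2) * eNorm α := by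
    calc eNorm ((G - S) *ᵥ α) ≤ Real.sqrt (∑ i, ∑ j, (G - S) i j ^ 2) * eNorm α :=
          frobenius_bound _ _
    _ ≤ (c / 2) * eNorm α := by
        apply mul_le_mul_of_nonneg_right hfro
        rw [eNorm_eq]; exact norm_nonneg _
  -- triangle inequality
  have htri : eNorm (G *ᵥ α) ≤ eNorm (S *ᵥ α) + eNorm ((G - S) *ᵥ α) := by
    rw [eNorm_eq, eNorm_eq, eNorm_eq]
    have h1 : (G : Matrix (Fin n) (Fin n) ℝ) *ᵥ α = S *ᵥ α + ((G - S) *ᵥ α) := by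
      rw [Matrix.sub_mulVec]; abel
    rw [h1]
    simpa using norm_add_le ((WithLp.equiv 2 (Fin n → ℝ)).symm (S *ᵥ α))
      ((WithLp.equiv 2 (Fin n → ℝ)).symm ((G - S) *ᵥ α))
  have hlow := hclow α
  linarith
end

section
/- (Lemma 2.) Let x : ℝ → M be continuous, let I ⊆ [0, ∞) be a bounded Lebesgue-measurable set, and for i = 1, …, n let I_i = { s ∈ I : d(x_i, x(s)) ≤ ε }. If μ(I_i) ≥ τ₀ for each i = 1, …, n, where τ₀ > 0, then for every α ∈ ℝ^n, ∫_I (g_α(x(τ)))² dτ ≥ τ₀ θ² ‖α‖². -/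
open MeasureTheory Matrix Set

theorem stmt3 {M : Type*} [MetricSpace M] {n : ℕ}
    (K : M → M → ℝ) (hKcont : Continuous fun p : M × M => K p.1 p.2)
    (hKspd : StrictlyPD K)
    (xc : Fin n → M) (hxc : Function.Injective xc)
    (ε θ : ℝ) (hε : 0 < ε) (hθ : 0 < θ)
    -- (i) the lower bound on `S(y_1,…,y_n)` for perturbed centers
    (hSbound : ∀ y : Fin n → M, (∀ i, dist (xc i) (y i) ≤ ε) →
      ∀ α : Fin n → ℝ, θ * eNorm α ≤ eNorm ((Smat K xc y) *ᵥ α))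
    -- (ii) `ε` is less than half the minimal pairwise distance between the centers
    (hsep : ∀ i j, i ≠ j → ε < (1 / 2) * dist (xc i) (xc j))
    -- (iii) the closed balls of radius `ε` about the centers are compact and connected
    (hball : ∀ i, IsCompact (Metric.closedBall (xc i) ε) ∧
      IsConnected (Metric.closedBall (xc i) ε))
    (x : ℝ → M) (hx : Continuous x)
    (I : Set ℝ) (hIsub : I ⊆ Set.Ici 0) (hIbdd : Bornology.IsBounded I)
    (hImeas : MeasurableSet I)
    (τ₀ : ℝ) (hτ₀ : 0 < τ₀)
    (hIi : ∀ i, ENNReal.ofReal τ₀ ≤ volume {s ∈ I | dist (xc i) (x s) ≤ ε}) :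
    ∀ α : Fin n → ℝ, τ₀ * θ ^ 2 * eNorm α ^ 2 ≤ ∫ τ in I, (gcomb K xc α (x τ)) ^ 2 := by
  intro α
  set g : M → ℝ := gcomb K xc α with hg
  have hgc : Continuous g := by
    unfold g
    unfold gcomb
    exact continuous_finset_sum _ fun i _ =>
      continuous_const.mul (hKcont.comp (Continuous.prodMk_right (xc i)))
  set f : ℝ → ℝ := fun τ => (g (x τ)) ^ 2 with hfdef
  have hfc : Continuous f := ((hgc.comp hx).pow 2)
  have hfnn : ∀ s, 0 ≤ f s := fun s => sq_nonneg _
  -- integrability on I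
  have hIclos : IsCompact (closure I) :=
    Metric.isCompact_of_isClosed_isBounded isClosed_closure hIbdd.closure
  have hfint : IntegrableOn f I volume :=
    (hfc.continuousOn.integrableOn_compact hIclos).mono_set subset_closure
  -- the sets I_i
  set Ii : Fin n → Set ℝ := fun i => {s ∈ I | dist (xc i) (x s) ≤ ε} with hIidef
  have hmeas : ∀ i, MeasurableSet (Ii i) := by
    intro i
    exact hImeas.inter
      (measurableSet_le (continuous_const.dist hx).measurable measurable_const)
  have hIisub : ∀ i, Ii i ⊆ I := fun i s hs => hs.1
  have hIifin : ∀ i, volume (Ii i) ≠ ⊤ := by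
    intro i
    exact ne_top_of_le_ne_top hIclos.measure_lt_top.ne
      (measure_mono ((hIisub i).trans subset_closure))
  have hτle : ∀ i, τ₀ ≤ (volume (Ii i)).toReal := by
    intro i
    have := ENNReal.toReal_mono (hIifin i) (hIi i)
    rwa [ENNReal.toReal_ofReal hτ₀.le] at this
  -- minimizers on the closed balls
  have hmin : ∀ i : Fin n, ∃ y ∈ Metric.closedBall (xc i) ε,
      ∀ z ∈ Metric.closedBall (xc i) ε, (g y) ^ 2 ≤ (g z) ^ 2 := by
    intro i
    obtain ⟨y, hy, hmin⟩ := (hball i).1.exists_isMinOn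
      ⟨xc i, Metric.mem_closedBall_self hε.le⟩ (hgc.pow 2).continuousOn
    exact ⟨y, hy, fun z hz => hmin hz⟩
  choose y hyball hymin using hmin
  have hydist : ∀ i, dist (xc i) (y i) ≤ ε := by
    intro i
    have := hyball i
    rw [Metric.mem_closedBall] at this
    rwa [dist_comm]
  -- key bound from hSbound
  have hSα := hSbound y hydist α
  have hkey : θ ^ 2 * eNorm α ^ 2 ≤ ∑ i, (g (y i)) ^ 2 := by
    have h1 : (θ * eNorm α) ^ 2 ≤ eNorm ((Smat K xc y) *ᵥ α) ^ 2 := by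
      apply pow_le_pow_left₀ _ hSα
      exact mul_nonneg hθ.le (Real.sqrt_nonneg _)
    have h2 : eNorm ((Smat K xc y) *ᵥ α) ^ 2 = ∑ i, ((Smat K xc y) *ᵥ α) i ^ 2 := by
      unfold eNorm
      exact Real.sq_sqrt (Finset.sum_nonneg fun i _ => sq_nonneg _)
    have h3 : ∀ i, ((Smat K xc y) *ᵥ α) i = g (y i) := by
      intro i
      unfold g
      unfold gcomb Smat Matrix.mulVec dotProduct
      exact Finset.sum_congr rfl fun j _ => mul_comm _ _
    calc θ ^ 2 * eNorm α ^ 2 = (θ * eNorm α) ^ 2 := by ring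
      _ ≤ eNorm ((Smat K xc y) *ᵥ α) ^ 2 := h1
      _ = ∑ i, ((Smat K xc y) *ᵥ α) i ^ 2 := h2
      _ = ∑ i, (g (y i)) ^ 2 := Finset.sum_congr rfl fun i _ => by rw [h3 i]
  -- per-set integral bound
  have hper : ∀ i : Fin n, τ₀ * (g (y i)) ^ 2 ≤ ∫ τ in Ii i, f τ := by
    intro i
    have hlb : ∀ s ∈ Ii i, (g (y i)) ^ 2 ≤ f s := by
      intro s hs
      exact hymin i (x s) (by rw [Metric.mem_closedBall, dist_comm]; exact hs.2)
    have h := setIntegral_ge_of_const_le (hmeas i) (hIifin i) hlb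
      (hfint.mono_set (hIisub i))
    calc τ₀ * (g (y i)) ^ 2 ≤ (volume (Ii i)).toReal * (g (y i)) ^ 2 :=
          mul_le_mul_of_nonneg_right (hτle i) (sq_nonneg _)
      _ = (g (y i)) ^ 2 * (volume (Ii i)).toReal := mul_comm _ _
      _ ≤ _ := by rw [smul_eq_mul, measureReal_def, mul_comm] at h; exact h
  -- the I_i are pairwise disjoint
  have hdisj : Set.Pairwise (Finset.univ : Finset (Fin n)) (Function.onFun Disjoint Ii) := by
    intro i _ j _ hij
    rw [Function.onFun, Set.disjoint_left]
    intro s hsi hsj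
    have h1 : dist (xc i) (x s) ≤ ε := hsi.2
    have h2 : dist (xc j) (x s) ≤ ε := hsj.2
    have h3 := hsep i j hij
    have h4 : dist (xc i) (xc j) ≤ dist (xc i) (x s) + dist (x s) (xc j) :=
      dist_triangle _ _ _
    rw [dist_comm (x s) (xc j)] at h4
    linarith
  -- assemble
  have hbiu : ∫ τ in ⋃ i ∈ (Finset.univ : Finset (Fin n)), Ii i, f τ
      = ∑ i, ∫ τ in Ii i, f τ :=
    integral_biUnion_finset _ (fun i _ => hmeas i) hdisj
      (fun i _ => hfint.mono_set (hIisub i))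
  have hsub : (⋃ i ∈ (Finset.univ : Finset (Fin n)), Ii i) ⊆ I := by
    intro s hs
    simp only [Finset.mem_univ, Set.mem_iUnion, exists_prop, true_and] at hs
    obtain ⟨i, hi⟩ := hs
    exact hIisub i hi
  have hmono : ∫ τ in ⋃ i ∈ (Finset.univ : Finset (Fin n)), Ii i, f τ ≤ ∫ τ in I, f τ :=
    setIntegral_mono_set hfint (Filter.Eventually.of_forall hfnn)
      (HasSubset.Subset.eventuallyLE hsub)
  calc τ₀ * θ ^ 2 * eNorm α ^ 2 = τ₀ * (θ ^ 2 * eNorm α ^ 2) := by ring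
    _ ≤ τ₀ * ∑ i, (g (y i)) ^ 2 := mul_le_mul_of_nonneg_left hkey hτ₀.le
    _ = ∑ i, τ₀ * (g (y i)) ^ 2 := Finset.mul_sum _ _ _
    _ ≤ ∑ i, ∫ τ in Ii i, f τ := Finset.sum_le_sum fun i _ => hper i
    _ = ∫ τ in ⋃ i ∈ (Finset.univ : Finset (Fin n)), Ii i, f τ := hbiu.symm
    _ ≤ ∫ τ in I, f τ := hmono
end

section
/- (Theorem: sufficient condition for persistence of excitation.) Let x : [0, ∞) → M be continuous. Suppose there exist T₂ ≥ 0, Δ₂ > 0 and τ₀ > 0 such that for every t ≥ T₂ and each i = 1, …, n, μ({ s ∈ [t, t+Δ₂] : d(x_i, x(s)) ≤ ε }) ≥ τ₀. Then the trajectory x satisfies the finite-dimensional PE-2 condition with constants T₂, Δ₂ and γ₂ = τ₀ θ² / λ̄, where λ̄ is the largest eigenvalue of the Gram matrix G; that is, ∫_t^{t+Δ₂} (g_α(x(τ)))² dτ ≥ (τ₀ θ² / λ̄) αᵀ G α for all t ≥ T₂ and all α ∈ ℝ^n. -/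
open MeasureTheory Matrix Set

/-- The Gram matrix `G_{ij} = K(x_i, x_j)` of the kernel centers. -/
def Gram {M : Type*} {n : ℕ} (K : M → M → ℝ) (xc : Fin n → M) : Matrix (Fin n) (Fin n) ℝ :=
  Matrix.of fun i j => K (xc i) (xc j)

/-- The finite-dimensional PE-2 condition with constants `T₂, γ₂, Δ₂`. -/
def PE2 {M : Type*} {n : ℕ} (K : M → M → ℝ) (xc : Fin n → M) (x : ℝ → M)
    (T₂ γ₂ Δ₂ : ℝ) : Prop :=
  ∀ t ≥ T₂, ∀ α : Fin n → ℝ,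
    γ₂ * (α ⬝ᵥ (Gram K xc) *ᵥ α) ≤ ∫ τ in Set.Icc t (t + Δ₂), (gcomb K xc α (x τ)) ^ 2

lemma quad_bound {n : ℕ} {A : Matrix (Fin n) (Fin n) ℝ} (hA : A.IsHermitian)
    (lam : ℝ) (hlam : ∀ i, hA.eigenvalues i ≤ lam) (α : Fin n → ℝ) :
    α ⬝ᵥ A *ᵥ α ≤ lam * ∑ i, α i ^ 2 := by
  classical
  set U : Matrix (Fin n) (Fin n) ℝ := (hA.eigenvectorUnitary : Matrix (Fin n) (Fin n) ℝ) with hU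
  have hstar : star U = Uᵀ := by
    ext i j; simp [Matrix.star_apply]
  set β : Fin n → ℝ := Uᵀ *ᵥ α with hβ
  have hspec := hA.spectral_theorem
  have hquad : α ⬝ᵥ A *ᵥ α = ∑ i, hA.eigenvalues i * β i ^ 2 := by
    conv_lhs => rw [hspec, Unitary.conjStarAlgAut_apply]
    rw [hstar, ← mulVec_mulVec, ← mulVec_mulVec, dotProduct_mulVec, ← mulVec_transpose]
    simp only [← hβ, mulVec_diagonal]
    simp [dotProduct, sq, mulVec_diagonal]
    exact Finset.sum_congr rfl fun i _ => by ring
  have hnorm : ∑ i, β i ^ 2 = ∑ i, α i ^ 2 := by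
    have h1 : U * star U = 1 := (Matrix.mem_unitaryGroup_iff).mp hA.eigenvectorUnitary.2
    have : β ⬝ᵥ β = α ⬝ᵥ α := by
      rw [hβ, dotProduct_mulVec, ← mulVec_transpose, Matrix.transpose_transpose,
        mulVec_mulVec]
      rw [← hstar, h1, one_mulVec]
    simpa [dotProduct, sq] using this
  rw [hquad, ← hnorm, Finset.mul_sum]
  exact Finset.sum_le_sum fun i _ => mul_le_mul_of_nonneg_right (hlam i) (sq_nonneg _)

theorem stmt4 {M : Type*} [MetricSpace M] {n : ℕ} (hn : 0 < n)
    (K : M → M → ℝ) (hKcont : Continuous fun p : M × M => K p.1 p.2)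
    (hKspd : StrictlyPD K)
    (xc : Fin n → M) (hxc : Function.Injective xc)
    (hG : (Gram K xc).IsHermitian)
    (ε θ : ℝ) (hε : 0 < ε) (hθ : 0 < θ)
    -- (i) the lower bound on `S(y_1,…,y_n)` for perturbed centers
    (hSbound : ∀ y : Fin n → M, (∀ i, dist (xc i) (y i) ≤ ε) →
      ∀ α : Fin n → ℝ, θ * eNorm α ≤ eNorm ((Smat K xc y) *ᵥ α))
    -- (ii) `ε` is less than half the minimal pairwise distance between the centers
    (hsep : ∀ i j, i ≠ j → ε < (1 / 2) * dist (xc i) (xc j))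
    -- (iii) the closed balls of radius `ε` about the centers are compact and connected
    (hball : ∀ i, IsCompact (Metric.closedBall (xc i) ε) ∧
      IsConnected (Metric.closedBall (xc i) ε))
    (x : ℝ → M) (hx : ContinuousOn x (Set.Ici 0))
    (T₂ Δ₂ τ₀ : ℝ) (hT₂ : 0 ≤ T₂) (hΔ₂ : 0 < Δ₂) (hτ₀ : 0 < τ₀)
    -- in every window `[t, t+Δ₂]` the trajectory spends time at least `τ₀`
    -- within distance `ε` of each center
    (hvisit : ∀ t ≥ T₂, ∀ i,
      ENNReal.ofReal τ₀ ≤ volume {s ∈ Set.Icc t (t + Δ₂) | dist (xc i) (x s) ≤ ε}) :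
    PE2 K xc x T₂ (τ₀ * θ ^ 2 / (⨆ i, hG.eigenvalues i)) Δ₂ := by
  classical
  intro t ht α
  -- the Gram matrix is positive definite, so the top eigenvalue is positive
  have hGpd : (Gram K xc).PosDef := hKspd.2 n xc hxc
  set lam : ℝ := ⨆ i, hG.eigenvalues i with hlamdef
  have hbdd : BddAbove (Set.range hG.eigenvalues) := (Set.finite_range _).bddAbove
  have hlam_le : ∀ i, hG.eigenvalues i ≤ lam := fun i => le_ciSup hbdd i
  have hlampos : 0 < lam := by
    have h0 : 0 < hG.eigenvalues ⟨0, hn⟩ := hGpd.eigenvalues_pos ⟨0, hn⟩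
    exact lt_of_lt_of_le h0 (hlam_le ⟨0, hn⟩)
  -- setup
  have htsub : Set.Icc t (t + Δ₂) ⊆ Set.Ici (0 : ℝ) := fun s hs =>
    le_trans (le_trans hT₂ ht) hs.1
  set f : ℝ → ℝ := fun s => (gcomb K xc α (x s)) ^ 2 with hfdef
  have hgc : Continuous (gcomb K xc α) := by
    apply continuous_finset_sum
    intro i _
    exact continuous_const.mul (hKcont.comp (continuous_const.prodMk continuous_id))
  have hfc : ContinuousOn f (Set.Icc t (t + Δ₂)) :=
    ((hgc.comp_continuousOn (hx.mono htsub)).pow 2)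
  have hInt : IntegrableOn f (Set.Icc t (t + Δ₂)) := hfc.integrableOn_Icc
  set A : Fin n → Set ℝ := fun i => {s ∈ Set.Icc t (t + Δ₂) | dist (xc i) (x s) ≤ ε} with hAdef
  have hAcl : ∀ i, IsClosed (A i) := by
    intro i
    have hc : ContinuousOn (fun s => dist (xc i) (x s)) (Set.Icc t (t + Δ₂)) :=
      (Continuous.dist continuous_const continuous_id).comp_continuousOn (hx.mono htsub)
    exact hc.preimage_isClosed_of_isClosed isClosed_Icc isClosed_Iic
  have hAsub : ∀ i, A i ⊆ Set.Icc t (t + Δ₂) := fun i s hs => hs.1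
  have hAcomp : ∀ i, IsCompact (A i) := fun i =>
    isCompact_Icc.of_isClosed_subset (hAcl i) (hAsub i)
  have hAmeas : ∀ i, MeasurableSet (A i) := fun i => (hAcl i).measurableSet
  have hAvol : ∀ i, ENNReal.ofReal τ₀ ≤ volume (A i) := fun i => hvisit t ht i
  have hAfin : ∀ i, volume (A i) ≠ ⊤ := fun i =>
    ne_top_of_le_ne_top (by simp) (measure_mono (hAsub i))
  have hAvolR : ∀ i, τ₀ ≤ (volume (A i)).toReal := by
    intro i
    have := ENNReal.toReal_mono (hAfin i) (hAvol i)
    rwa [ENNReal.toReal_ofReal hτ₀.le] at this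
  have hAne : ∀ i, (A i).Nonempty := by
    intro i
    rcases Set.eq_empty_or_nonempty (A i) with h | h
    · exfalso
      have h0 : (0 : ENNReal) < ENNReal.ofReal τ₀ := ENNReal.ofReal_pos.2 hτ₀
      have hv := hAvol i
      rw [h] at hv
      simp only [measure_empty, nonpos_iff_eq_zero] at hv
      exact h0.ne' hv
    · exact h
  -- minimum points on each visit set
  have hmin : ∀ i, ∃ s₀ ∈ A i, ∀ s ∈ A i, f s₀ ≤ f s := by
    intro i
    obtain ⟨s₀, hs₀, hmin⟩ := (hAcomp i).exists_isMinOn (hAne i) (hfc.mono (hAsub i))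
    exact ⟨s₀, hs₀, fun s hs => hmin hs⟩
  choose s₀ hs₀mem hs₀min using hmin
  set y : Fin n → M := fun i => x (s₀ i) with hydef
  have hydist : ∀ i, dist (xc i) (y i) ≤ ε := fun i => (hs₀mem i).2
  -- the visit sets are pairwise disjoint
  have hdisj : Pairwise (Function.onFun Disjoint A) := by
    intro i j hij
    refine Set.disjoint_left.2 fun s hsi hsj => ?_
    have h1 : dist (xc i) (xc j) ≤ dist (xc i) (x s) + dist (x s) (xc j) := dist_triangle _ _ _
    have h2 := hsep i j hij
    rw [dist_comm (x s)] at h1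
    have := hsi.2
    have := hsj.2
    linarith
  -- lower bound of sum of f at minima via hSbound
  have hSv : ∀ i, (Smat K xc y *ᵥ α) i = gcomb K xc α (y i) := by
    intro i
    simp [Smat, Matrix.mulVec, dotProduct, gcomb, mul_comm]
  have hsum : θ ^ 2 * ∑ i, α i ^ 2 ≤ ∑ i, f (s₀ i) := by
    have hb := hSbound y hydist α
    have hnn : 0 ≤ θ * eNorm α := mul_nonneg hθ.le (Real.sqrt_nonneg _)
    have h1 : (θ * eNorm α) ^ 2 ≤ (eNorm (Smat K xc y *ᵥ α)) ^ 2 :=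
      pow_le_pow_left₀ hnn hb 2
    have hα : (eNorm α) ^ 2 = ∑ i, α i ^ 2 :=
      Real.sq_sqrt (Finset.sum_nonneg fun i _ => sq_nonneg _)
    have hS : (eNorm (Smat K xc y *ᵥ α)) ^ 2 = ∑ i, (Smat K xc y *ᵥ α) i ^ 2 :=
      Real.sq_sqrt (Finset.sum_nonneg fun i _ => sq_nonneg _)
    rw [mul_pow, hα, hS] at h1
    calc θ ^ 2 * ∑ i, α i ^ 2 ≤ ∑ i, (Smat K xc y *ᵥ α) i ^ 2 := h1
      _ = ∑ i, f (s₀ i) := by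
          refine Finset.sum_congr rfl fun i _ => ?_
          rw [hSv i]
  -- the integral bound
  have hkey : ∑ i, τ₀ * f (s₀ i) ≤ ∫ τ in Set.Icc t (t + Δ₂), f τ := by
    have hIntU : IntegrableOn f (⋃ i, A i) :=
      hInt.mono_set (Set.iUnion_subset hAsub)
    have hUnion : ∫ τ in ⋃ i, A i, f τ = ∑ i, ∫ τ in A i, f τ := by
      rw [integral_iUnion hAmeas hdisj hIntU, tsum_fintype]
    have hstep1 : ∀ i, τ₀ * f (s₀ i) ≤ ∫ τ in A i, f τ := by
      intro i
      have hconst : f (s₀ i) * (volume (A i)).toReal ≤ ∫ τ in A i, f τ :=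
        setIntegral_ge_of_const_le_real (hAmeas i) (hAfin i) (fun s hs => hs₀min i s hs)
          (hInt.mono_set (hAsub i))
      have : τ₀ * f (s₀ i) ≤ f (s₀ i) * (volume (A i)).toReal := by
        rw [mul_comm τ₀]
        exact mul_le_mul_of_nonneg_left (hAvolR i) (sq_nonneg _)
      linarith
    calc ∑ i, τ₀ * f (s₀ i) ≤ ∑ i, ∫ τ in A i, f τ :=
          Finset.sum_le_sum fun i _ => hstep1 i
      _ = ∫ τ in ⋃ i, A i, f τ := hUnion.symm
      _ ≤ ∫ τ in Set.Icc t (t + Δ₂), f τ := by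
          apply setIntegral_mono_set hInt
          · exact Filter.Eventually.of_forall fun s => sq_nonneg _
          · exact HasSubset.Subset.eventuallyLE (Set.iUnion_subset hAsub)
  -- put everything together
  have hquad : α ⬝ᵥ (Gram K xc) *ᵥ α ≤ lam * ∑ i, α i ^ 2 := quad_bound hG lam hlam_le α
  have hγnn : 0 ≤ τ₀ * θ ^ 2 / lam := by positivity
  calc τ₀ * θ ^ 2 / lam * (α ⬝ᵥ (Gram K xc) *ᵥ α)
      ≤ τ₀ * θ ^ 2 / lam * (lam * ∑ i, α i ^ 2) := mul_le_mul_of_nonneg_left hquad hγnn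
    _ = τ₀ * (θ ^ 2 * ∑ i, α i ^ 2) := by
        field_simp
    _ ≤ τ₀ * ∑ i, f (s₀ i) := mul_le_mul_of_nonneg_left hsum hτ₀.le
    _ = ∑ i, τ₀ * f (s₀ i) := by rw [Finset.mul_sum]
    _ ≤ ∫ τ in Set.Icc t (t + Δ₂), f τ := hkey
end

section
/- (PE-1 implies PE-2, finite-dimensional form.) Let (M, d) be a metric space, K : M × M → ℝ a continuous strictly positive definite kernel, x_1, …, x_n ∈ M pairwise distinct, and let x : [0, ∞) → M be a continuous trajectory whose image has compact closure. If the finite-dimensional PE-1 condition holds with constants T₁, γ₁, δ₁, Δ₁ > 0, then the finite-dimensional PE-2 condition holds with constants T₂ = T₁, Δ₂ = Δ₁ + δ₁ and γ₂ = γ₁² / δ₁; that is, ∫_t^{t+Δ₁+δ₁} (g_α(x(τ)))² dτ ≥ (γ₁²/δ₁) αᵀ G α for all t ≥ T₁ and all α ∈ ℝ^n. -/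
open MeasureTheory Matrix Set

/-- The finite-dimensional PE-1 condition with constants `T₁, γ₁, δ₁, Δ₁`. -/
def PE1 {M : Type*} {n : ℕ} (K : M → M → ℝ) (xc : Fin n → M) (x : ℝ → M)
    (T₁ γ₁ δ₁ Δ₁ : ℝ) : Prop :=
  ∀ t ≥ T₁, ∀ α : Fin n → ℝ, ∃ s ∈ Set.Icc t (t + Δ₁),
    γ₁ * Real.sqrt (α ⬝ᵥ (Gram K xc) *ᵥ α) ≤
      |∫ τ in Set.Icc s (s + δ₁), gcomb K xc α (x τ)|

theorem stmt5 {M : Type*} [MetricSpace M] {n : ℕ}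
    (K : M → M → ℝ) (hKcont : Continuous fun p : M × M => K p.1 p.2)
    (hKspd : StrictlyPD K)
    (xc : Fin n → M) (hxc : Function.Injective xc)
    (x : ℝ → M) (hx : ContinuousOn x (Set.Ici 0))
    (hcomp : IsCompact (closure (x '' Set.Ici 0)))
    (T₁ γ₁ δ₁ Δ₁ : ℝ) (hT₁ : 0 < T₁) (hγ₁ : 0 < γ₁) (hδ₁ : 0 < δ₁) (hΔ₁ : 0 < Δ₁)
    (hPE1 : PE1 K xc x T₁ γ₁ δ₁ Δ₁) :
    PE2 K xc x T₁ (γ₁ ^ 2 / δ₁) (Δ₁ + δ₁) := by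
  intro t ht α
  set q : ℝ := α ⬝ᵥ (Gram K xc) *ᵥ α with hqdef
  have hq0 : 0 ≤ q := by
    simpa [Gram, hqdef] using ((hKspd.2 n xc hxc).posSemidef).re_dotProduct_nonneg α
  obtain ⟨s, hs, hineq⟩ := hPE1 t ht α
  have ht0 : (0:ℝ) ≤ t := le_of_lt (lt_of_lt_of_le hT₁ ht)
  set g : ℝ → ℝ := fun τ => gcomb K xc α (x τ) with hgdef
  have hsub : Icc s (s + δ₁) ⊆ Icc t (t + (Δ₁ + δ₁)) := by
    intro τ hτ
    exact ⟨by linarith [hτ.1, hs.1], by linarith [hτ.2, hs.2]⟩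
  have hsubI : Icc t (t + (Δ₁ + δ₁)) ⊆ Ici (0:ℝ) := fun τ hτ => le_trans ht0 hτ.1
  have hgc : Continuous (gcomb K xc α) := by
    unfold gcomb
    exact continuous_finset_sum _ fun i _ =>
      continuous_const.mul (hKcont.comp (Continuous.prodMk_right (xc i)))
  have hgC : ContinuousOn g (Icc t (t + (Δ₁ + δ₁))) :=
    hgc.comp_continuousOn (hx.mono hsubI)
  have hint2 : IntegrableOn (fun τ => g τ ^ 2) (Icc t (t + (Δ₁ + δ₁))) :=
    (hgC.pow 2).integrableOn_Icc
  set S : Set ℝ := Icc s (s + δ₁) with hSdef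
  have hS2 : IntegrableOn (fun τ => g τ ^ 2) S := hint2.mono_set hsub
  have hSg : IntegrableOn g S := (hgC.mono hsub).integrableOn_Icc
  have hmeas : volume S = ENNReal.ofReal δ₁ := by
    simp [hSdef, Real.volume_Icc]
  have hfin : IsFiniteMeasure (volume.restrict S) := by
    constructor
    rw [Measure.restrict_apply_univ, hmeas]
    exact ENNReal.ofReal_lt_top
  set A : ℝ := ∫ τ in S, g τ ^ 2 with hAdef
  have hA0 : 0 ≤ A := by
    apply setIntegral_nonneg measurableSet_Icc
    intro τ _; positivity
  -- Cauchy–Schwarz via Hölder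
  have hCS : |∫ τ in S, g τ| ≤ Real.sqrt A * Real.sqrt δ₁ := by
    have hconj : (2:ℝ).HolderConjugate 2 := by
      constructor <;> norm_num
    have hmem : MemLp (fun τ => |g τ|) (ENNReal.ofReal 2) (volume.restrict S) := by
      rw [show ENNReal.ofReal 2 = 2 by norm_num]
      rw [memLp_two_iff_integrable_sq]
      · have : (fun τ => |g τ| ^ 2) = fun τ => g τ ^ 2 := by
          funext τ; rw [sq_abs]
        rw [this]; exact hS2
      · exact hSg.abs.aestronglyMeasurable
    have hmem1 : MemLp (fun _ : ℝ => (1:ℝ)) (ENNReal.ofReal 2) (volume.restrict S) :=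
      memLp_const 1
    have hH := MeasureTheory.integral_mul_le_Lp_mul_Lq_of_nonneg hconj
      (f := fun τ => |g τ|) (g := fun _ => (1:ℝ))
      (Filter.Eventually.of_forall fun τ => abs_nonneg _)
      (Filter.Eventually.of_forall fun τ => zero_le_one) hmem hmem1
    simp only [mul_one] at hH
    have h1 : ∫ τ in S, |g τ| ^ (2:ℝ) = A := by
      rw [hAdef]
      apply setIntegral_congr_fun measurableSet_Icc
      intro τ _
      show |g τ| ^ (2:ℝ) = g τ ^ 2
      rw [Real.rpow_two, sq_abs]
    have h2 : ∫ τ in S, (1:ℝ) ^ (2:ℝ) = δ₁ := by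
      simp [measureReal_def, hmeas, ENNReal.toReal_ofReal hδ₁.le]
    rw [h1, h2] at hH
    calc |∫ τ in S, g τ| ≤ ∫ τ in S, |g τ| := by
          simpa using norm_integral_le_integral_norm (μ := volume.restrict S) g
      _ ≤ A ^ (1/(2:ℝ)) * δ₁ ^ (1/(2:ℝ)) := hH
      _ = Real.sqrt A * Real.sqrt δ₁ := by
          rw [Real.sqrt_eq_rpow, Real.sqrt_eq_rpow]
  have hmono : A ≤ ∫ τ in Icc t (t + (Δ₁ + δ₁)), g τ ^ 2 := by
    apply setIntegral_mono_set hint2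
    · exact Filter.Eventually.of_forall fun τ => sq_nonneg _
    · exact HasSubset.Subset.eventuallyLE hsub
  have hkey : γ₁ ^ 2 * q ≤ δ₁ * A := by
    have h1 : γ₁ * Real.sqrt q ≤ Real.sqrt A * Real.sqrt δ₁ := le_trans hineq hCS
    have h2 : (γ₁ * Real.sqrt q) ^ 2 ≤ (Real.sqrt A * Real.sqrt δ₁) ^ 2 := by
      apply pow_le_pow_left₀ (by positivity) h1
    calc γ₁ ^ 2 * q = (γ₁ * Real.sqrt q) ^ 2 := by
          rw [mul_pow, Real.sq_sqrt hq0]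
      _ ≤ (Real.sqrt A * Real.sqrt δ₁) ^ 2 := h2
      _ = δ₁ * A := by rw [mul_pow, Real.sq_sqrt hA0, Real.sq_sqrt hδ₁.le, mul_comm]
  rw [div_mul_eq_mul_div, div_le_iff₀ hδ₁]
  calc γ₁ ^ 2 * q ≤ δ₁ * A := hkey
    _ ≤ δ₁ * ∫ τ in Icc t (t + (Δ₁ + δ₁)), g τ ^ 2 := by
        exact mul_le_mul_of_nonneg_left hmono hδ₁.le
    _ = (∫ τ in Icc t (t + (Δ₁ + δ₁)), gcomb K xc α (x τ) ^ 2) * δ₁ := by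
        rw [mul_comm]
end

section
/- (PE-2 implies PE-1 under uniform equicontinuity.) Let (M, d) be a compact metric space, K : M × M → ℝ a continuous strictly positive definite kernel, x_1, …, x_n ∈ M pairwise distinct, and x : [0, ∞) → M continuous. Suppose the family of functions U(S̄_n) = { t ↦ g_α(x(t)) : α ∈ ℝ^n, αᵀ G α = 1 } is uniformly equicontinuous on [0, ∞), and that the finite-dimensional PE-2 condition holds with constants T₂, γ₂, Δ₂ > 0. Then there exist constants T₁, γ₁, δ₁, Δ₁ > 0 such that the finite-dimensional PE-1 condition holds. -/
open MeasureTheory Matrix Set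

theorem stmt6 {M : Type*} [MetricSpace M] [CompactSpace M] {n : ℕ}
    (K : M → M → ℝ) (hKcont : Continuous fun p : M × M => K p.1 p.2)
    (hKspd : StrictlyPD K)
    (xc : Fin n → M) (hxc : Function.Injective xc)
    (x : ℝ → M) (hx : ContinuousOn x (Set.Ici 0))
    -- the family `{ t ↦ g_α(x(t)) : αᵀ G α = 1 }` is uniformly equicontinuous on `[0,∞)`
    (hequi : ∀ η > 0, ∃ δ > 0, ∀ α : Fin n → ℝ, α ⬝ᵥ (Gram K xc) *ᵥ α = 1 →
      ∀ s t : ℝ, 0 ≤ s → 0 ≤ t → |s - t| < δ →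
        |gcomb K xc α (x s) - gcomb K xc α (x t)| < η)
    (T₂ γ₂ Δ₂ : ℝ) (hT₂ : 0 < T₂) (hγ₂ : 0 < γ₂) (hΔ₂ : 0 < Δ₂)
    (hPE2 : PE2 K xc x T₂ γ₂ Δ₂) :
    ∃ T₁ > 0, ∃ γ₁ > 0, ∃ δ₁ > 0, ∃ Δ₁ > 0, PE1 K xc x T₁ γ₁ δ₁ Δ₁ := by
 -- Gram matrix is positive definite
  have hG : (Gram K xc).PosDef := hKspd.2 n xc hxc
  -- continuity of gcomb in y
  have hgcont : ∀ α : Fin n → ℝ, Continuous (gcomb K xc α) := by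
    intro α
    unfold gcomb
    exact continuous_finset_sum _ fun i _ =>
      continuous_const.mul (hKcont.comp (continuous_const.prodMk continuous_id))
  set c := Real.sqrt (γ₂ / Δ₂) with hc
  have hcpos : 0 < c := Real.sqrt_pos.2 (div_pos hγ₂ hΔ₂)
  obtain ⟨δ, hδpos, hδ⟩ := hequi (c / 2) (by positivity)
  refine ⟨T₂, hT₂, (δ / 2) * (c / 2), by positivity, δ / 2, by positivity, Δ₂, hΔ₂, ?_⟩
  intro t ht α
  have ht0 : (0:ℝ) < t := lt_of_lt_of_le hT₂ ht
  by_cases hα : α = 0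
  · refine ⟨t, ⟨le_refl t, by linarith⟩, ?_⟩
    simp [hα, gcomb]
  have hq : 0 < α ⬝ᵥ (Gram K xc) *ᵥ α := by
    have := hG.dotProduct_mulVec_pos hα
    simpa using this
  set q := α ⬝ᵥ (Gram K xc) *ᵥ α with hqdef
  have hsq : 0 < Real.sqrt q := Real.sqrt_pos.2 hq
  set β := (Real.sqrt q)⁻¹ • α with hβdef
  have hβ1 : β ⬝ᵥ (Gram K xc) *ᵥ β = 1 := by
    rw [hβdef, Matrix.mulVec_smul, smul_dotProduct, dotProduct_smul]
    simp only [smul_eq_mul, ← hqdef]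
    rw [← mul_assoc, ← mul_inv, Real.mul_self_sqrt hq.le, inv_mul_cancel₀ hq.ne']
  -- gcomb scaling
  have hscale : ∀ y, gcomb K xc α y = Real.sqrt q * gcomb K xc β y := by
    intro y
    simp only [hβdef, gcomb, Pi.smul_apply, smul_eq_mul, Finset.mul_sum]
    refine Finset.sum_congr rfl fun i _ => ?_
    field_simp
  set f := fun τ => gcomb K xc β (x τ) with hfdef
  have hfc : ∀ a b : ℝ, 0 ≤ a → ContinuousOn f (Icc a b) := by
    intro a b ha
    exact (hgcont β).comp_continuousOn (hx.mono fun τ hτ => le_trans ha hτ.1)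
  -- PE2 for β
  have h2 : γ₂ ≤ ∫ τ in Icc t (t + Δ₂), (f τ) ^ 2 := by
    have := hPE2 t ht β
    rwa [hβ1, mul_one] at this
  -- find a point where |f| is large
  have hne : (Icc t (t + Δ₂)).Nonempty := ⟨t, le_refl t, by linarith⟩
  obtain ⟨s, hsmem, hsmax⟩ :=
    isCompact_Icc.exists_isMaxOn hne ((hfc t (t + Δ₂) ht0.le).abs)
  have hmax : ∀ τ ∈ Icc t (t + Δ₂), |f τ| ≤ |f s| := fun τ hτ => hsmax hτ
  have hcs : c ≤ |f s| := by
    by_contra hlt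
    push_neg at hlt
    have hbound : ∫ τ in Icc t (t + Δ₂), (f τ) ^ 2 ≤ ∫ _ in Icc t (t + Δ₂), (f s) ^ 2 := by
      refine setIntegral_mono_on
        (((hfc t (t + Δ₂) ht0.le).pow 2).integrableOn_Icc)
        (integrableOn_const (by rw [Real.volume_Icc]; exact ENNReal.ofReal_ne_top))
        measurableSet_Icc fun τ hτ => ?_
      have := hmax τ hτ
      calc (f τ) ^ 2 = |f τ| ^ 2 := (sq_abs _).symm
        _ ≤ |f s| ^ 2 := by gcongr
        _ = (f s) ^ 2 := sq_abs _
    have hconst : ∫ _ in Icc t (t + Δ₂), (f s) ^ 2 = Δ₂ * (f s) ^ 2 := by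
      rw [setIntegral_const, measureReal_def, Real.volume_Icc, ENNReal.toReal_ofReal (by linarith),
        smul_eq_mul]
      ring_nf
    have hfs2 : (f s) ^ 2 < γ₂ / Δ₂ := by
      have : |f s| ^ 2 < c ^ 2 := by
        apply sq_lt_sq' _ hlt
        linarith [abs_nonneg (f s)]
      rw [sq_abs] at this
      rwa [hc, Real.sq_sqrt (div_pos hγ₂ hΔ₂).le] at this
    have : ∫ τ in Icc t (t + Δ₂), (f τ) ^ 2 < γ₂ := by
      calc ∫ τ in Icc t (t + Δ₂), (f τ) ^ 2 ≤ Δ₂ * (f s) ^ 2 := hconst ▸ hbound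
        _ < Δ₂ * (γ₂ / Δ₂) := by exact mul_lt_mul_of_pos_left hfs2 hΔ₂
        _ = γ₂ := by field_simp
    linarith
  -- s ≥ 0
  have hs0 : (0:ℝ) ≤ s := le_trans ht0.le hsmem.1
  refine ⟨s, hsmem, ?_⟩
  -- rewrite integral using scaling
  have hint : ∫ τ in Icc s (s + δ / 2), gcomb K xc α (x τ)
      = Real.sqrt q * ∫ τ in Icc s (s + δ / 2), f τ := by
    rw [← integral_const_mul]
    exact setIntegral_congr_fun measurableSet_Icc fun τ _ => hscale (x τ)
  rw [hint, abs_mul, abs_of_nonneg hsq.le]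
  rw [mul_comm ((δ / 2) * (c / 2)) _]
  refine mul_le_mul_of_nonneg_left ?_ (Real.sqrt_nonneg q)
  -- equicontinuity bound on [s, s + δ/2]
  have hclose : ∀ τ ∈ Icc s (s + δ / 2), |f τ - f s| < c / 2 := by
    intro τ hτ
    refine hδ β hβ1 τ s (le_trans hs0 hτ.1) hs0 ?_
    rw [abs_sub_lt_iff]
    constructor <;> [linarith [hτ.2]; linarith [hτ.1]]
  have hfint : IntegrableOn f (Icc s (s + δ / 2)) := (hfc s (s + δ / 2) hs0).integrableOn_Icc
  have hvol : ∫ _ in Icc s (s + δ / 2), (c / 2 : ℝ) = (δ / 2) * (c / 2) := by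
    rw [setIntegral_const, measureReal_def, Real.volume_Icc, ENNReal.toReal_ofReal (by linarith), smul_eq_mul]
    ring_nf
  have hcint : IntegrableOn (fun _ : ℝ => (c / 2 : ℝ)) (Icc s (s + δ / 2)) :=
    integrableOn_const (by rw [Real.volume_Icc]; exact ENNReal.ofReal_ne_top)
  rcases le_or_gt c (f s) with hpos | hneg
  · -- positive case: f τ ≥ c/2 on the interval
    have hlow : ∀ τ ∈ Icc s (s + δ / 2), c / 2 ≤ f τ := by
      intro τ hτ
      have := hclose τ hτ
      rw [abs_sub_lt_iff] at this
      linarith [this.2]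
    have : (δ / 2) * (c / 2) ≤ ∫ τ in Icc s (s + δ / 2), f τ := by
      rw [← hvol]
      exact setIntegral_mono_on hcint hfint measurableSet_Icc hlow
    exact le_trans this (le_abs_self _)
  · -- negative case: f s ≤ -c
    have hneg' : f s ≤ -c := by
      rcases abs_cases (f s) with ⟨he, _⟩ | ⟨he, _⟩
      · linarith
      · linarith
    have hup : ∀ τ ∈ Icc s (s + δ / 2), f τ ≤ -(c / 2) := by
      intro τ hτ
      have := hclose τ hτ
      rw [abs_sub_lt_iff] at this
      linarith [this.1]
    have : ∫ τ in Icc s (s + δ / 2), f τ ≤ -((δ / 2) * (c / 2)) := by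
      have hcint' : IntegrableOn (fun _ : ℝ => (-(c / 2) : ℝ)) (Icc s (s + δ / 2)) :=
        integrableOn_const (by rw [Real.volume_Icc]; exact ENNReal.ofReal_ne_top)
      have := setIntegral_mono_on hfint hcint' measurableSet_Icc hup
      have hvol' : ∫ _ in Icc s (s + δ / 2), (-(c / 2) : ℝ) = -((δ / 2) * (c / 2)) := by
        rw [setIntegral_const, measureReal_def, Real.volume_Icc, ENNReal.toReal_ofReal (by linarith), smul_eq_mul]
        ring_nf
      linarith [hvol' ▸ this]
    exact le_trans (by linarith) (neg_le_abs _)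
end

section
/- Let (M, d) be a compact metric space, K : M × M → ℝ a continuous strictly positive definite kernel, x_1, …, x_n ∈ M pairwise distinct, and x : [0, ∞) → M uniformly continuous. Then the family of functions { t ↦ g_α(x(t)) : α ∈ ℝ^n, αᵀ G α = 1 } is uniformly equicontinuous on [0, ∞). -/
open MeasureTheory Matrix Set

/-- Coefficient vectors on the Gram-quadratic-form unit sphere are uniformly bounded. -/
lemma gram_coeff_bound {n : ℕ} (G : Matrix (Fin n) (Fin n) ℝ) (hG : G.PosDef)
    (hn : 0 < n) : ∃ B : ℝ, 0 < B ∧ ∀ α : Fin n → ℝ, α ⬝ᵥ G *ᵥ α = 1 → ∀ i, |α i| ≤ B := by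
  haveI : Nonempty (Fin n) := Fin.pos_iff_nonempty.mp hn
  set q : (Fin n → ℝ) → ℝ := fun α => α ⬝ᵥ G *ᵥ α with hq
  have hqcont : Continuous q := by
    unfold q
    continuity
  have hScpt : IsCompact (Metric.sphere (0 : Fin n → ℝ) 1) := isCompact_sphere 0 1
  have hSne : (Metric.sphere (0 : Fin n → ℝ) 1).Nonempty :=
    NormedSpace.sphere_nonempty.2 zero_le_one
  obtain ⟨u, huS, humin⟩ := hScpt.exists_isMinOn hSne hqcont.continuousOn
  have hu0 : u ≠ 0 := by
    intro h
    rw [mem_sphere_zero_iff_norm, h] at huS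
    simp at huS
  have hc : 0 < q u := by simpa using hG.dotProduct_mulVec_pos hu0
  refine ⟨Real.sqrt (1 / q u), Real.sqrt_pos.2 (by positivity), ?_⟩
  intro α hα i
  have hα0 : α ≠ 0 := by
    intro h; rw [h] at hα; simp [dotProduct] at hα
  have hna : 0 < ‖α‖ := norm_pos_iff.2 hα0
  have hmem : (‖α‖⁻¹ • α) ∈ Metric.sphere (0 : Fin n → ℝ) 1 := by
    rw [mem_sphere_zero_iff_norm, norm_smul, norm_inv, norm_norm]
    field_simp
  have hqs : q (‖α‖⁻¹ • α) = ‖α‖⁻¹ * (‖α‖⁻¹ * q α) := by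
    simp [q, smul_dotProduct, Matrix.mulVec_smul, dotProduct_smul, mul_assoc]
  have hle : q u ≤ ‖α‖⁻¹ * ‖α‖⁻¹ := by
    have h2 : q u ≤ q (‖α‖⁻¹ • α) := humin hmem
    have hqα : q α = 1 := hα
    rw [hqs, hqα] at h2
    simpa using h2
  have h1 : ‖α‖ ≤ Real.sqrt (1 / q u) := by
    rw [Real.le_sqrt hna.le (by positivity)]
    rw [le_div_iff₀ hc]
    have : q u * ‖α‖ ^ 2 ≤ (‖α‖⁻¹ * ‖α‖⁻¹) * ‖α‖^2 := by nlinarith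
    calc ‖α‖ ^ 2 * q u = q u * ‖α‖^2 := by ring
    _ ≤ (‖α‖⁻¹ * ‖α‖⁻¹) * ‖α‖^2 := this
    _ = 1 := by field_simp
  calc |α i| = ‖α i‖ := rfl
    _ ≤ ‖α‖ := norm_le_pi_norm α i
    _ ≤ _ := h1

theorem stmt7 {M : Type*} [MetricSpace M] [CompactSpace M] {n : ℕ}
    (K : M → M → ℝ) (hKcont : Continuous fun p : M × M => K p.1 p.2)
    (hKspd : StrictlyPD K)
    (xc : Fin n → M) (hxc : Function.Injective xc)
    (x : ℝ → M) (hx : UniformContinuousOn x (Set.Ici 0)) :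
    -- the family `{ t ↦ g_α(x(t)) : αᵀ G α = 1 }` is uniformly equicontinuous on `[0,∞)`
    ∀ η > 0, ∃ δ > 0, ∀ α : Fin n → ℝ, α ⬝ᵥ (Gram K xc) *ᵥ α = 1 →
      ∀ s t : ℝ, 0 ≤ s → 0 ≤ t → |s - t| < δ →
        |gcomb K xc α (x s) - gcomb K xc α (x t)| < η := by
  intro η hη
  rcases Nat.eq_zero_or_pos n with hn | hn
  · subst hn
    exact ⟨1, one_pos, fun α hα s t hs ht hst => by simpa [gcomb] using hη⟩
  -- coefficient bound
  obtain ⟨B, hB, hbound⟩ := gram_coeff_bound (Gram K xc) (hKspd.2 n xc hxc) hn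
  set ε : ℝ := η / ((n : ℝ) * B + 1) with hε
  have hD : 0 < (n : ℝ) * B + 1 := by positivity
  have hεpos : 0 < ε := by positivity
  -- uniform continuity of K
  have hKuc : UniformContinuous (fun p : M × M => K p.1 p.2) :=
    CompactSpace.uniformContinuous_of_continuous hKcont
  obtain ⟨δK, hδK, hK⟩ := Metric.uniformContinuous_iff.1 hKuc ε hεpos
  obtain ⟨δ, hδ, hxd⟩ := Metric.uniformContinuousOn_iff.1 hx δK hδK
  refine ⟨δ, hδ, ?_⟩
  intro α hα s t hs ht hst
  have hd : dist (x s) (x t) < δK := by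
    apply hxd s hs t ht
    rwa [Real.dist_eq]
  have hKi : ∀ i, |K (xc i) (x s) - K (xc i) (x t)| < ε := by
    intro i
    have hp : dist ((xc i, x s) : M × M) ((xc i, x t)) < δK := by
      rw [Prod.dist_eq]
      simp only [dist_self, max_lt_iff]
      exact ⟨hδK, hd⟩
    have := hK hp
    rwa [Real.dist_eq] at this
  have key : gcomb K xc α (x s) - gcomb K xc α (x t)
      = ∑ i, α i * (K (xc i) (x s) - K (xc i) (x t)) := by
    simp [gcomb, mul_sub, Finset.sum_sub_distrib]
  rw [key]
  calc |∑ i, α i * (K (xc i) (x s) - K (xc i) (x t))|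
      ≤ ∑ i, |α i * (K (xc i) (x s) - K (xc i) (x t))| := Finset.abs_sum_le_sum_abs _ _
    _ ≤ ∑ _i : Fin n, B * ε := by
        apply Finset.sum_le_sum
        intro i _
        rw [abs_mul]
        exact mul_le_mul (hbound α hα i) (hKi i).le (abs_nonneg _) hB.le
    _ = (n : ℝ) * B * ε := by
        rw [Finset.sum_const, Finset.card_univ, Fintype.card_fin, nsmul_eq_mul]; ring
    _ < ((n : ℝ) * B + 1) * ε := by
        apply mul_lt_mul_of_pos_right _ hεpos
        linarith
    _ = η := by rw [hε]; field_simp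
end

section
/- (Corollary: sufficient condition implies PE-1.) Let (M, d) be a compact metric space, K : M × M → ℝ a continuous strictly positive definite kernel, x_1, …, x_n ∈ M pairwise distinct, and x : [0, ∞) → M uniformly continuous. Let ε, θ > 0 satisfy conditions (i)–(iii) of the context. Suppose there exist T₂ ≥ 0, Δ₂ > 0 and τ₀ > 0 such that for every t ≥ T₂ and each i = 1, …, n, μ({ s ∈ [t, t+Δ₂] : d(x_i, x(s)) ≤ ε }) ≥ τ₀. Then there exist constants T₁, γ₁, δ₁, Δ₁ > 0 such that the finite-dimensional PE-1 condition holds. -/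
open MeasureTheory Matrix Set

lemma abs_apply_le_eNorm {m : ℕ} (v : Fin m → ℝ) (i : Fin m) : |v i| ≤ eNorm v := by
  rw [← Real.sqrt_sq_eq_abs]
  exact Real.sqrt_le_sqrt (Finset.single_le_sum (f := fun j => v j ^ 2)
    (fun j _ => sq_nonneg _) (Finset.mem_univ i))


theorem stmt8 {M : Type*} [MetricSpace M] [CompactSpace M] {n : ℕ}
    (K : M → M → ℝ) (hKcont : Continuous fun p : M × M => K p.1 p.2)
    (hKspd : StrictlyPD K)
    (xc : Fin n → M) (hxc : Function.Injective xc)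
    (x : ℝ → M) (hx : UniformContinuousOn x (Set.Ici 0))
    (ε θ : ℝ) (hε : 0 < ε) (hθ : 0 < θ)
    -- (i) the lower bound on `S(y_1,…,y_n)` for perturbed centers
    (hSbound : ∀ y : Fin n → M, (∀ i, dist (xc i) (y i) ≤ ε) →
      ∀ α : Fin n → ℝ, θ * eNorm α ≤ eNorm ((Smat K xc y) *ᵥ α))
    -- (ii) `ε` is less than half the minimal pairwise distance between the centers
    (hsep : ∀ i j, i ≠ j → ε < (1 / 2) * dist (xc i) (xc j))
    -- (iii) the closed balls of radius `ε` about the centers are compact and connected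
    (hball : ∀ i, IsCompact (Metric.closedBall (xc i) ε) ∧
      IsConnected (Metric.closedBall (xc i) ε))
    (T₂ Δ₂ τ₀ : ℝ) (hT₂ : 0 ≤ T₂) (hΔ₂ : 0 < Δ₂) (hτ₀ : 0 < τ₀)
    -- in every window `[t, t+Δ₂]` the trajectory spends time at least `τ₀`
    -- within distance `ε` of each center
    (hvisit : ∀ t ≥ T₂, ∀ i,
      ENNReal.ofReal τ₀ ≤ volume {s ∈ Set.Icc t (t + Δ₂) | dist (xc i) (x s) ≤ ε}) :
    ∃ T₁ > 0, ∃ γ₁ > 0, ∃ δ₁ > 0, ∃ Δ₁ > 0, PE1 K xc x T₁ γ₁ δ₁ Δ₁ := by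
  have hM : Nonempty M := ⟨x 0⟩
  rcases Nat.eq_zero_or_pos n with hn | hn
  · subst hn
    refine ⟨T₂ + 1, by linarith, 1, one_pos, 1, one_pos, Δ₂, hΔ₂, ?_⟩
    intro t ht α
    refine ⟨t, ⟨le_refl t, by linarith⟩, ?_⟩
    have h0 : α ⬝ᵥ (Gram K xc) *ᵥ α = 0 := by
      simp [dotProduct]
    rw [h0, Real.sqrt_zero, mul_zero]
    exact abs_nonneg _
  -- main case
  have hnp : (0:ℝ) < n := by exact_mod_cast hn
  have hsn : 0 < Real.sqrt n := Real.sqrt_pos.mpr hnp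
  -- bound on K
  obtain ⟨p₀, -, hp₀'⟩ := isCompact_univ.exists_isMaxOn Set.univ_nonempty
      (hKcont.abs.continuousOn)
  have hp₀ : ∀ q : M × M, |K q.1 q.2| ≤ |K p₀.1 p₀.2| := fun q => hp₀' (mem_univ q)
  set B := |K p₀.1 p₀.2| with hBdef
  have hB0 : 0 ≤ B := abs_nonneg _
  have hBK : ∀ y z : M, |K y z| ≤ B := fun y z => hp₀ (y, z)
  -- uniform continuity of K
  have hKu : UniformContinuous (fun p : M × M => K p.1 p.2) :=
    CompactSpace.uniformContinuous_of_continuous hKcont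
  set η := θ / (2 * n * Real.sqrt n) with hηdef
  have hηpos : 0 < η := div_pos hθ (mul_pos (mul_pos two_pos hnp) hsn)
  obtain ⟨δK, hδK, hKδ⟩ := Metric.uniformContinuous_iff.mp hKu η hηpos
  obtain ⟨δx, hδx, hxδ⟩ := Metric.uniformContinuousOn_iff.mp hx δK hδK
  set δ₁ := δx / 2 with hδ₁def
  have hδ₁ : 0 < δ₁ := by positivity
  set D := Real.sqrt (B + 1) * n with hDdef
  have hD : 0 < D := mul_pos (Real.sqrt_pos.mpr (by linarith)) hnp
  set γ₁ := θ * δ₁ / (2 * Real.sqrt n * D) with hγ₁def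
  have hγ₁ : 0 < γ₁ := div_pos (mul_pos hθ hδ₁) (by positivity)
  refine ⟨T₂ + 1, by linarith, γ₁, hγ₁, δ₁, hδ₁, Δ₂, hΔ₂, ?_⟩
  intro t ht α
  by_cases hα : α = 0
  · refine ⟨t, ⟨le_refl t, by linarith⟩, ?_⟩
    subst hα
    have h0 : (0 : Fin n → ℝ) ⬝ᵥ (Gram K xc) *ᵥ (0 : Fin n → ℝ) = 0 := by simp
    rw [h0, Real.sqrt_zero, mul_zero]
    exact abs_nonneg _
  -- α ≠ 0
  have hα2 : 0 < ∑ i, α i ^ 2 := by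
    obtain ⟨i, hi⟩ := Function.ne_iff.mp hα
    exact Finset.sum_pos' (fun j _ => sq_nonneg _)
      ⟨i, Finset.mem_univ i, pow_pos (abs_pos.mpr hi) 2 |>.trans_le (by rw [sq_abs])⟩
  have hEα : 0 < eNorm α := Real.sqrt_pos.mpr hα2
  -- existence of visit times
  have hts : ∀ i : Fin n, ∃ s ∈ Icc t (t + Δ₂), dist (xc i) (x s) ≤ ε := by
    intro i
    have h := hvisit t (by linarith) i
    by_contra hcon
    push_neg at hcon
    have hemp : {s | s ∈ Icc t (t + Δ₂) ∧ dist (xc i) (x s) ≤ ε} = ∅ := by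
      ext s
      simp only [mem_setOf_eq, mem_empty_iff_false, iff_false, not_and, not_le]
      exact fun hs => hcon s hs
    rw [show {s ∈ Icc t (t + Δ₂) | dist (xc i) (x s) ≤ ε}
        = {s | s ∈ Icc t (t + Δ₂) ∧ dist (xc i) (x s) ≤ ε} from rfl, hemp] at h
    simp only [measure_empty, le_zero_iff, ENNReal.ofReal_eq_zero] at h
    linarith
  choose sf hsf1 hsf2 using hts
  set y : Fin n → M := fun i => x (sf i) with hydef
  set v : Fin n → ℝ := (Smat K xc y) *ᵥ α with hvdef
  have hv : θ * eNorm α ≤ eNorm v := hSbound y (fun i => hsf2 i) α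
  have hvi : ∀ i, v i = gcomb K xc α (y i) := by
    intro i
    simp only [hvdef, Smat, Matrix.mulVec, dotProduct, Matrix.of_apply, gcomb]
    exact Finset.sum_congr rfl fun j _ => mul_comm _ _
  -- maximal coordinate
  obtain ⟨i, -, hi⟩ := Finset.exists_max_image Finset.univ (fun j => |v j|)
    ⟨⟨0, hn⟩, Finset.mem_univ _⟩
  have hmax : eNorm v ≤ Real.sqrt n * |v i| := by
    have h1 : ∑ j, v j ^ 2 ≤ (n : ℝ) * v i ^ 2 := by
      calc ∑ j, v j ^ 2 ≤ ∑ _j : Fin n, v i ^ 2 := by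
            refine Finset.sum_le_sum fun j _ => ?_
            rw [← sq_abs (v j), ← sq_abs (v i)]
            exact pow_le_pow_left₀ (abs_nonneg _) (hi j (Finset.mem_univ j)) 2
        _ = (n : ℝ) * v i ^ 2 := by simp [Finset.sum_const, mul_comm]
    calc eNorm v = Real.sqrt (∑ j, v j ^ 2) := rfl
      _ ≤ Real.sqrt ((n : ℝ) * v i ^ 2) := Real.sqrt_le_sqrt h1
      _ = Real.sqrt n * |v i| := by
          rw [Real.sqrt_mul (Nat.cast_nonneg n), Real.sqrt_sq_eq_abs]
  set c := θ * eNorm α / (2 * Real.sqrt n) with hcdef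
  have hc : 0 < c := div_pos (mul_pos hθ hEα) (by positivity)
  have hbig : 2 * c ≤ |v i| := by
    have h2 : θ * eNorm α ≤ Real.sqrt n * |v i| := le_trans hv hmax
    have heq : 2 * c = θ * eNorm α / Real.sqrt n := by
      rw [hcdef]; field_simp
    rw [heq, div_le_iff₀ hsn]
    linarith [mul_comm (Real.sqrt (n:ℝ)) |v i|]
  set s := sf i with hsdef
  set G : ℝ → ℝ := fun τ => gcomb K xc α (x τ) with hGdef
  have hGs : 2 * c ≤ |G s| := by rw [hGdef]; simpa [hvi i, hydef] using hbig
  have hst : s ∈ Icc t (t + Δ₂) := hsf1 i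
  have hs0 : (0:ℝ) ≤ s := le_trans (by linarith [hst.1]) (le_refl s)
  -- deviation bound on the interval
  have hdev : ∀ τ ∈ Icc s (s + δ₁), |G τ - G s| ≤ c := by
    intro τ hτ
    have hτ0 : (0:ℝ) ≤ τ := le_trans hs0 hτ.1
    have hdist : dist τ s < δx := by
      rw [Real.dist_eq, abs_of_nonneg (by linarith [hτ.1])]
      have h2 := hτ.2
      linarith [hδx, hδ₁def]
    have hxx : dist (x τ) (x s) < δK := hxδ τ hτ0 s hs0 hdist
    have hterm : ∀ j : Fin n, |K (xc j) (x τ) - K (xc j) (x s)| ≤ η := by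
      intro j
      have hd : dist ((xc j, x τ) : M × M) (xc j, x s) < δK := by
        rw [Prod.dist_eq]
        simp only [dist_self]
        exact max_lt hδK hxx
      have := hKδ hd
      rw [Real.dist_eq] at this
      exact le_of_lt this
    have hsum : |G τ - G s| ≤ ∑ j : Fin n, eNorm α * η := by
      rw [hGdef]
      simp only [gcomb, ← Finset.sum_sub_distrib]
      calc |∑ j, (α j * K (xc j) (x τ) - α j * K (xc j) (x s))|
          ≤ ∑ j, |α j * K (xc j) (x τ) - α j * K (xc j) (x s)| := Finset.abs_sum_le_sum_abs _ _
        _ ≤ ∑ j : Fin n, eNorm α * η := by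
            refine Finset.sum_le_sum fun j _ => ?_
            rw [← mul_sub, abs_mul]
            exact mul_le_mul (abs_apply_le_eNorm α j) (hterm j) (abs_nonneg _)
              (le_of_lt hEα)
    have heq : (∑ _j : Fin n, eNorm α * η) = c := by
      rw [Finset.sum_const, Finset.card_univ, Fintype.card_fin, nsmul_eq_mul,
        hηdef, hcdef]
      field_simp
    calc |G τ - G s| ≤ ∑ _j : Fin n, eNorm α * η := hsum
      _ = c := heq
  -- integrability
  have hGcont : Continuous (gcomb K xc α) := by
    apply continuous_finset_sum
    intro j _
    exact continuous_const.mul (hKcont.comp (continuous_const.prodMk continuous_id))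
  have hInt : IntegrableOn G (Icc s (s + δ₁)) volume := by
    apply ContinuousOn.integrableOn_Icc
    exact hGcont.comp_continuousOn ((hx.continuousOn).mono
      (fun τ hτ => le_trans hs0 hτ.1))
  have hIntc : ∀ r : ℝ, IntegrableOn (fun _ => r) (Icc s (s + δ₁)) volume :=
    fun r => integrableOn_const (by rw [Real.volume_Icc]; exact ENNReal.ofReal_ne_top)
  have hconst : ∀ r : ℝ, (∫ _τ in Icc s (s + δ₁), r ∂volume) = r * δ₁ := by
    intro r
    rw [setIntegral_const, Real.volume_real_Icc_of_le (by linarith), show s + δ₁ - s = δ₁ by ring,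
      smul_eq_mul, mul_comm]
  -- final bound on Gram quadratic form
  have hq : α ⬝ᵥ (Gram K xc) *ᵥ α ≤ (B + 1) * n ^ 2 * eNorm α ^ 2 := by
    have hstep : ∀ i : Fin n, α i * ∑ j, K (xc i) (xc j) * α j
        ≤ eNorm α * ((n : ℝ) * ((B + 1) * eNorm α)) := by
      intro i
      calc α i * ∑ j, K (xc i) (xc j) * α j
          ≤ |α i * ∑ j, K (xc i) (xc j) * α j| := le_abs_self _
        _ = |α i| * |∑ j, K (xc i) (xc j) * α j| := abs_mul _ _
        _ ≤ eNorm α * ((n : ℝ) * ((B + 1) * eNorm α)) := by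
            refine mul_le_mul (abs_apply_le_eNorm α i) ?_ (abs_nonneg _) (le_of_lt hEα)
            calc |∑ j, K (xc i) (xc j) * α j| ≤ ∑ j, |K (xc i) (xc j) * α j| :=
                  Finset.abs_sum_le_sum_abs _ _
              _ ≤ ∑ _j : Fin n, (B + 1) * eNorm α := by
                  refine Finset.sum_le_sum fun j _ => ?_
                  rw [abs_mul]
                  exact mul_le_mul (le_trans (hBK _ _) (by linarith))
                    (abs_apply_le_eNorm α j) (abs_nonneg _) (by linarith)
              _ = (n : ℝ) * ((B + 1) * eNorm α) := by
                  simp [Finset.sum_const, mul_comm]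
    calc α ⬝ᵥ (Gram K xc) *ᵥ α
        = ∑ i, α i * ∑ j, K (xc i) (xc j) * α j := by
          simp [dotProduct, Matrix.mulVec, Gram]
      _ ≤ ∑ _i : Fin n, eNorm α * ((n : ℝ) * ((B + 1) * eNorm α)) :=
          Finset.sum_le_sum fun i _ => hstep i
      _ = (B + 1) * n ^ 2 * eNorm α ^ 2 := by
          rw [Finset.sum_const, Finset.card_univ, Fintype.card_fin, nsmul_eq_mul]
          ring
  have hsqrtG : Real.sqrt (α ⬝ᵥ (Gram K xc) *ᵥ α) ≤ D * eNorm α := by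
    have hDsq : (D * eNorm α) ^ 2 = (B + 1) * n ^ 2 * eNorm α ^ 2 := by
      rw [hDdef, mul_pow, mul_pow, Real.sq_sqrt (by linarith : (0:ℝ) ≤ B + 1)]
    calc Real.sqrt (α ⬝ᵥ (Gram K xc) *ᵥ α)
        ≤ Real.sqrt ((D * eNorm α) ^ 2) := Real.sqrt_le_sqrt (by linarith)
      _ = |D * eNorm α| := Real.sqrt_sq_eq_abs _
      _ = D * eNorm α := abs_of_nonneg (by positivity)
  have hfinal : γ₁ * Real.sqrt (α ⬝ᵥ (Gram K xc) *ᵥ α) ≤ c * δ₁ := by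
    have heq : γ₁ * (D * eNorm α) = c * δ₁ := by
      rw [hγ₁def, hcdef]
      field_simp
    calc γ₁ * Real.sqrt (α ⬝ᵥ (Gram K xc) *ᵥ α)
        ≤ γ₁ * (D * eNorm α) := mul_le_mul_of_nonneg_left hsqrtG (le_of_lt hγ₁)
      _ = c * δ₁ := heq
  refine ⟨s, hst, ?_⟩
  refine le_trans hfinal ?_
  by_cases hGpos : 0 ≤ G s
  · have hGs2 : 2 * c ≤ G s := by rwa [abs_of_nonneg hGpos] at hGs
    have hlow : ∀ τ ∈ Icc s (s + δ₁), c ≤ G τ := by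
      intro τ hτ
      have := abs_le.mp (hdev τ hτ)
      linarith [this.1]
    have hIge : c * δ₁ ≤ ∫ τ in Icc s (s + δ₁), G τ := by
      rw [← hconst c]
      exact setIntegral_mono_on (hIntc c) hInt measurableSet_Icc hlow
    calc c * δ₁ ≤ ∫ τ in Icc s (s + δ₁), G τ := hIge
      _ ≤ |∫ τ in Icc s (s + δ₁), G τ| := le_abs_self _
  · push_neg at hGpos
    have hGs2 : G s ≤ -(2 * c) := by
      rw [abs_of_neg hGpos] at hGs
      linarith
    have hhigh : ∀ τ ∈ Icc s (s + δ₁), G τ ≤ -c := by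
      intro τ hτ
      have := abs_le.mp (hdev τ hτ)
      linarith [this.2]
    have hIle : (∫ τ in Icc s (s + δ₁), G τ) ≤ -c * δ₁ := by
      rw [← hconst (-c)]
      exact setIntegral_mono_on hInt (hIntc (-c)) measurableSet_Icc hhigh
    calc c * δ₁ ≤ -(∫ τ in Icc s (s + δ₁), G τ) := by linarith
      _ ≤ |∫ τ in Icc s (s + δ₁), G τ| := neg_le_abs _
end
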